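/- In the setting of the preceding statement (GO-property, eigenspaces $A_\alpha$, $A_\beta$ with $0 \neq \alpha \neq \beta \neq 0$): for every $X \in A_\alpha$ and $Y \in A_\beta$ there exist $Z_1 \in C_{\mathfrak{h}}(X)$ and $Z_2 \in C_{\mathfrak{h}}(Y)$ such that $[X,Y] = [Z_2,X] + [Z_1,Y]$. In particular, if $C_{\mathfrak{h}}(X) = 0$ then $[X,Y] \in A_\alpha$, if $C_{\mathfrak{h}}(Y) = 0$ then $[X,Y] \in A_\beta$, and if both centralizers vanish then $[X,Y] = 0$. -/
import Mathlib


/-- In the GO setting with `𝔪 = {X : B(X,𝔥)=0}` and eigenvectors `X ∈ A_α`,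
`Y ∈ A_β`, `0 ≠ α ≠ β ≠ 0`: there exist `Z₁ ∈ C_𝔥(X)`, `Z₂ ∈ C_𝔥(Y)` with
`[X,Y] = [Z₂,X] + [Z₁,Y]`. In particular, if `C_𝔥(X) = 0` then `[X,Y] ∈ A_α`, if `C_𝔥(Y) = 0`
then `[X,Y] ∈ A_β`, and if both vanish then `[X,Y] = 0`. -/
theorem go_space_bracket_of_eigenspaces_centralizers
    (L : Type*) [LieRing L] [LieAlgebra ℝ L] [FiniteDimensional ℝ L]
    (h : LieSubalgebra ℝ L) (m : Submodule ℝ L)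
    (hcompl : IsCompl h.toSubmodule m)
    (hmchar : ∀ x : L, x ∈ m ↔ ∀ W ∈ h, killingForm ℝ L x W = 0)
    (hadm : ∀ Z ∈ h, ∀ x ∈ m, ⁅Z, x⁆ ∈ m)
    (Φ : LinearMap.BilinForm ℝ L)
    (hΦsymm : ∀ x y : L, Φ x y = Φ y x)
    (hΦpos : ∀ x ∈ m, x ≠ 0 → 0 < Φ x x)
    (hΦinv : ∀ Z ∈ h, ∀ x ∈ m, ∀ y ∈ m, Φ ⁅Z, x⁆ y + Φ x ⁅Z, y⁆ = 0)
    (πm : L →ₗ[ℝ] L)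
    (hπmem : ∀ x : L, πm x ∈ m) (hπid : ∀ x ∈ m, πm x = x) (hπh : ∀ x ∈ h, πm x = 0)
    (hGO : ∀ X ∈ m, ∃ Z ∈ h, ∀ W ∈ m, Φ (πm ⁅X + Z, W⁆) X = 0)
    (A : L →ₗ[ℝ] L)
    (hAm : ∀ x ∈ m, A x ∈ m)
    (hAB : ∀ x ∈ m, ∀ y ∈ m, killingForm ℝ L x y = Φ (A x) y)
    (α β : ℝ) (hα : α ≠ 0) (hβ : β ≠ 0) (hαβ : α ≠ β)
    (X : L) (hX : X ∈ m) (hXe : A X = α • X)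
    (Y : L) (hY : Y ∈ m) (hYe : A Y = β • Y) :
    (∃ Z₁ ∈ h, ∃ Z₂ ∈ h, ⁅Z₁, X⁆ = 0 ∧ ⁅Z₂, Y⁆ = 0 ∧ ⁅X, Y⁆ = ⁅Z₂, X⁆ + ⁅Z₁, Y⁆) ∧
      ((∀ Z ∈ h, ⁅Z, X⁆ = 0 → Z = 0) → ⁅X, Y⁆ ∈ m ∧ A ⁅X, Y⁆ = α • ⁅X, Y⁆) ∧
      ((∀ Z ∈ h, ⁅Z, Y⁆ = 0 → Z = 0) → ⁅X, Y⁆ ∈ m ∧ A ⁅X, Y⁆ = β • ⁅X, Y⁆) ∧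
      ((∀ Z ∈ h, ⁅Z, X⁆ = 0 → Z = 0) → (∀ Z ∈ h, ⁅Z, Y⁆ = 0 → Z = 0) → ⁅X, Y⁆ = 0) := by
  classical
  set B : LinearMap.BilinForm ℝ L := killingForm ℝ L with hBdef
  have hBsymm : ∀ x y : L, B x y = B y x := fun x y => LieModule.traceForm_comm ℝ L L x y
  have hBinv : ∀ x y z : L, B ⁅x, y⁆ z = B x ⁅y, z⁆ := fun x y z =>
    LieModule.traceForm_apply_lie_apply ℝ L L x y z
  -- decomposition: x - πm x ∈ h
  have hdec : ∀ x : L, x - πm x ∈ h := by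
    intro x
    have hx : x ∈ h.toSubmodule ⊔ m := by
      rw [hcompl.sup_eq_top]; trivial
    obtain ⟨u, hu, v, hv, rfl⟩ := Submodule.mem_sup.mp hx
    have hπu : πm u = 0 := hπh u hu
    have hπv : πm v = v := hπid v hv
    simpa [map_add, hπu, hπv] using hu
  -- B x u = B x (πm u) for x ∈ m
  have hBmh : ∀ x ∈ m, ∀ u : L, B x u = B x (πm u) := by
    intro x hx u
    have h2 : B x (u - πm u) = 0 := (hmchar x).mp hx _ (hdec u)
    have h3 : B x u - B x (πm u) = 0 := by rw [← map_sub]; exact h2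
    linarith
  -- positive definiteness consequences
  have hposne : ∀ w ∈ m, Φ w w = 0 → w = 0 := by
    intro w hw hww
    by_contra hne
    exact absurd hww (ne_of_gt (hΦpos w hw hne))
  have hzero : ∀ w ∈ m, (∀ y ∈ m, Φ w y = 0) → w = 0 := by
    intro w hw hall
    exact hposne w hw (hall w hw)
  -- A commutes with ad Z for Z ∈ h
  have hcomm : ∀ Z ∈ h, ∀ x ∈ m, A ⁅Z, x⁆ = ⁅Z, A x⁆ := by
    intro Z hZ x hx
    have hmem : A ⁅Z, x⁆ - ⁅Z, A x⁆ ∈ m :=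
      sub_mem (hAm _ (hadm Z hZ x hx)) (hadm Z hZ _ (hAm x hx))
    have key : ∀ y ∈ m, Φ (A ⁅Z, x⁆ - ⁅Z, A x⁆) y = 0 := by
      intro y hy
      have e1 : Φ (A ⁅Z, x⁆) y = B ⁅Z, x⁆ y := (hAB _ (hadm Z hZ x hx) y hy).symm
      have e2 : B ⁅Z, x⁆ y = - B x ⁅Z, y⁆ := by
        rw [← lie_skew Z x, map_neg, LinearMap.neg_apply, hBinv]
      have e3 : B x ⁅Z, y⁆ = Φ (A x) ⁅Z, y⁆ := hAB x hx _ (hadm Z hZ y hy)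
      have e4 : Φ ⁅Z, A x⁆ y + Φ (A x) ⁅Z, y⁆ = 0 := hΦinv Z hZ _ (hAm x hx) y hy
      have e5 : Φ (A ⁅Z, x⁆) y = Φ ⁅Z, A x⁆ y := by rw [e1, e2, e3]; linarith
      simp only [map_sub, LinearMap.sub_apply, e5, sub_self]
    exact sub_eq_zero.mp (hzero _ hmem key)
  -- eigenvectors with distinct eigenvalues are Φ-orthogonal
  have horth : ∀ u ∈ m, ∀ v ∈ m, ∀ γ δ : ℝ, γ ≠ δ → A u = γ • u → A v = δ • v →
      Φ u v = 0 := by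
    intro u hu v hv γ δ hγδ hAu hAv
    have e1 : γ * Φ u v = B u v := by
      rw [hAB u hu v hv, hAu, map_smul, LinearMap.smul_apply, smul_eq_mul]
    have e2 : δ * Φ u v = B u v := by
      rw [hBsymm u v, hAB v hv u hu, hAv, map_smul, LinearMap.smul_apply, smul_eq_mul,
        hΦsymm v u]
    have e3 : (γ - δ) * Φ u v = 0 := by linarith
    rcases mul_eq_zero.mp e3 with hc | hc
    · exact absurd (sub_eq_zero.mp hc) hγδ
    · exact hc
  -- GO identity in usable form
  have hGO' : ∀ V ∈ m, ∃ Z ∈ h, ∀ W ∈ m, Φ (πm ⁅V, W⁆) V = Φ ⁅Z, V⁆ W := by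
    intro V hV
    obtain ⟨Z, hZ, hid⟩ := hGO V hV
    refine ⟨Z, hZ, fun W hW => ?_⟩
    have e0 := hid W hW
    have e1 : πm ⁅V + Z, W⁆ = πm ⁅V, W⁆ + ⁅Z, W⁆ := by
      rw [add_lie, map_add, hπid _ (hadm Z hZ W hW)]
    rw [e1, map_add, LinearMap.add_apply] at e0
    have e2 : Φ ⁅Z, W⁆ V + Φ W ⁅Z, V⁆ = 0 := hΦinv Z hZ W hW V hV
    have e3 : Φ W ⁅Z, V⁆ = Φ ⁅Z, V⁆ W := hΦsymm _ _
    linarith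
  -- pairing with eigenvectors
  have hpair : ∀ u ∈ m, ∀ x ∈ m, ∀ γ : ℝ, A x = γ • x → γ * Φ u x = B x u := by
    intro u hu x hx γ hAx
    rw [hΦsymm u x, hAB x hx u hu, hAx, map_smul, LinearMap.smul_apply, smul_eq_mul]
  -- bracket of eigenvectors lies in m
  have hbrm : ∀ Y' ∈ m, A Y' = β • Y' → ⁅X, Y'⁆ ∈ m := by
    intro Y' hY' hYe'
    rw [hmchar]
    intro W hW
    have h3 : ⁅W, Y'⁆ ∈ m := hadm W hW Y' hY'
    have h4 : A ⁅W, Y'⁆ = β • ⁅W, Y'⁆ := by rw [hcomm W hW Y' hY', hYe', lie_smul]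
    have h5 : Φ X ⁅W, Y'⁆ = 0 := horth X hX _ h3 α β hαβ hXe h4
    have h6 : B X ⁅W, Y'⁆ = Φ (A X) ⁅W, Y'⁆ := hAB X hX _ h3
    have h7 : Φ (A X) ⁅W, Y'⁆ = 0 := by
      rw [hXe, map_smul, LinearMap.smul_apply, smul_eq_mul, h5, mul_zero]
    show B ⁅X, Y'⁆ W = 0
    rw [hBinv X Y' W, ← lie_skew Y' W, map_neg, h6, h7, neg_zero]
  have hXYm : ⁅X, Y⁆ ∈ m := hbrm Y hY hYe
  -- main GO consequence applied to β•X + α•Y'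
  have main : ∀ Y' ∈ m, A Y' = β • Y' → ∃ Z ∈ h,
      (β - α) • A ⁅X, Y'⁆ = β • ⁅Z, X⁆ + α • ⁅Z, Y'⁆ := by
    intro Y' hY' hYe'
    have hXY'm : ⁅X, Y'⁆ ∈ m := hbrm Y' hY' hYe'
    set V : L := β • X + α • Y' with hVdef
    have hV : V ∈ m := add_mem (m.smul_mem β hX) (m.smul_mem α hY')
    obtain ⟨Z, hZ, hid⟩ := hGO' V hV
    refine ⟨Z, hZ, ?_⟩
    have hmem : (β - α) • A ⁅X, Y'⁆ - (β • ⁅Z, X⁆ + α • ⁅Z, Y'⁆) ∈ m :=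
      sub_mem (m.smul_mem _ (hAm _ hXY'm))
        (add_mem (m.smul_mem _ (hadm Z hZ X hX)) (m.smul_mem _ (hadm Z hZ Y' hY')))
    have key : ∀ W ∈ m, Φ ((β - α) • A ⁅X, Y'⁆ - (β • ⁅Z, X⁆ + α • ⁅Z, Y'⁆)) W = 0 := by
      intro W hW
      have hu : πm ⁅V, W⁆ ∈ m := hπmem _
      have bX : B X ⁅V, W⁆ = α * B ⁅X, Y'⁆ W := by
        rw [← hBinv]
        have hXV : ⁅X, V⁆ = α • ⁅X, Y'⁆ := by
          rw [hVdef, lie_add, lie_smul, lie_smul, lie_self, smul_zero, zero_add]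
        rw [hXV, map_smul, LinearMap.smul_apply, smul_eq_mul]
      have bY : B Y' ⁅V, W⁆ = -(β * B ⁅X, Y'⁆ W) := by
        rw [← hBinv]
        have hYV : ⁅Y', V⁆ = -(β • ⁅X, Y'⁆) := by
          rw [hVdef, lie_add, lie_smul, lie_smul, lie_self, smul_zero, add_zero,
            ← lie_skew Y' X, smul_neg]
        rw [hYV, map_neg, LinearMap.neg_apply, map_smul, LinearMap.smul_apply, smul_eq_mul]
      have pX : α * Φ (πm ⁅V, W⁆) X = B X (πm ⁅V, W⁆) := hpair _ hu X hX α hXe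
      have pY : β * Φ (πm ⁅V, W⁆) Y' = B Y' (πm ⁅V, W⁆) := hpair _ hu Y' hY' β hYe'
      have mX : B X (πm ⁅V, W⁆) = B X ⁅V, W⁆ := (hBmh X hX _).symm
      have mY : B Y' (πm ⁅V, W⁆) = B Y' ⁅V, W⁆ := (hBmh Y' hY' _).symm
      have eX : Φ (πm ⁅V, W⁆) X = B ⁅X, Y'⁆ W := by
        apply mul_left_cancel₀ hα
        rw [pX, mX, bX]
      have eY : Φ (πm ⁅V, W⁆) Y' = -(B ⁅X, Y'⁆ W) := by
        apply mul_left_cancel₀ hβ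
        rw [pY, mY, bY, mul_neg]
      have lhs : Φ (πm ⁅V, W⁆) V = (β - α) * B ⁅X, Y'⁆ W := by
        rw [hVdef, map_add, map_smul, map_smul, smul_eq_mul, smul_eq_mul, eX, eY]
        ring
      have rhs : Φ ⁅Z, V⁆ W = β * Φ ⁅Z, X⁆ W + α * Φ ⁅Z, Y'⁆ W := by
        rw [hVdef, lie_add, lie_smul, lie_smul, map_add, LinearMap.add_apply,
          map_smul, map_smul, LinearMap.smul_apply, LinearMap.smul_apply,
          smul_eq_mul, smul_eq_mul]
      have hAXY : B ⁅X, Y'⁆ W = Φ (A ⁅X, Y'⁆) W := hAB _ hXY'm W hW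
      have hmain := hid W hW
      rw [lhs, rhs, hAXY] at hmain
      simp only [map_sub, map_add, map_smul, LinearMap.sub_apply, LinearMap.add_apply,
        LinearMap.smul_apply, smul_eq_mul]
      linarith
    exact sub_eq_zero.mp (hzero _ hmem key)
  obtain ⟨Z, hZ, hZeq⟩ := main Y hY hYe
  have hYneg : A (-Y) = β • (-Y) := by rw [map_neg, hYe, smul_neg]
  obtain ⟨Z', hZ', hZ'eq⟩ := main (-Y) (neg_mem hY) hYneg
  have hZ'eq2 : -((β - α) • A ⁅X, Y⁆) = β • ⁅Z', X⁆ - α • ⁅Z', Y⁆ := by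
    rw [lie_neg, map_neg, smul_neg, lie_neg, smul_neg] at hZ'eq
    linear_combination (norm := module) hZ'eq
  set u : L := ⁅Z + Z', X⁆ with hudef
  set v : L := ⁅Z - Z', Y⁆ with hvdef
  have hZZ'h : Z + Z' ∈ h := h.add_mem hZ hZ'
  have hZZ'h' : Z - Z' ∈ h := by
    have := h.add_mem hZ (h.smul_mem (-1 : ℝ) hZ')
    simpa [sub_eq_add_neg] using this
  have hum : u ∈ m := hadm _ hZZ'h X hX
  have hvm : v ∈ m := hadm _ hZZ'h' Y hY
  have hAu : A u = α • u := by rw [hudef, hcomm _ hZZ'h X hX, hXe, lie_smul]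
  have hAv : A v = β • v := by rw [hvdef, hcomm _ hZZ'h' Y hY, hYe, lie_smul]
  have hsum : β • u + α • v = 0 := by
    rw [hudef, hvdef, add_lie, sub_lie]
    linear_combination (norm := module) -hZeq - hZ'eq2
  have huv : Φ u v = 0 := horth u hum v hvm α β hαβ hAu hAv
  have hu0 : u = 0 := by
    apply hposne u hum
    have h1 : Φ (β • u + α • v) u = 0 := by rw [hsum]; simp
    have h2 : β * Φ u u + α * Φ v u = 0 := by
      simpa [map_add, map_smul, LinearMap.add_apply, LinearMap.smul_apply, smul_eq_mul]
        using h1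
    have h3 : Φ v u = 0 := by rw [hΦsymm v u]; exact huv
    rw [h3, mul_zero, add_zero] at h2
    rcases mul_eq_zero.mp h2 with hc | hc
    · exact absurd hc hβ
    · exact hc
  have hv0 : v = 0 := by
    have h1 : α • v = 0 := by
      have h2 := hsum
      rw [hu0, smul_zero, zero_add] at h2
      exact h2
    rcases smul_eq_zero.mp h1 with hc | hc
    · exact absurd hc hα
    · exact hc
  have hdiff : (2 * (β - α)) • A ⁅X, Y⁆ = β • ⁅Z - Z', X⁆ + α • ⁅Z + Z', Y⁆ := by
    rw [sub_lie, add_lie]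
    linear_combination (norm := module) hZeq - hZ'eq2
  have hd : β - α ≠ 0 := sub_ne_zero.mpr (Ne.symm hαβ)
  set c : ℝ := (2 * (β - α))⁻¹ with hcdef
  have hc2d : c * (2 * (β - α)) = 1 := by
    rw [hcdef]
    field_simp
  set Z₁ : L := (c * α / β) • (Z + Z') with hZ₁def
  set Z₂ : L := (c * β / α) • (Z - Z') with hZ₂def
  have hZ₁h : Z₁ ∈ h := h.smul_mem _ hZZ'h
  have hZ₂h : Z₂ ∈ h := h.smul_mem _ hZZ'h'
  have hZ₁X : ⁅Z₁, X⁆ = 0 := by rw [hZ₁def, smul_lie, ← hudef, hu0, smul_zero]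
  have hZ₂Y : ⁅Z₂, Y⁆ = 0 := by rw [hZ₂def, smul_lie, ← hvdef, hv0, smul_zero]
  set Q : L := ⁅Z₂, X⁆ + ⁅Z₁, Y⁆ with hQdef
  have hQm : Q ∈ m := add_mem (hadm _ hZ₂h X hX) (hadm _ hZ₁h Y hY)
  have a1 : A ⁅Z₂, X⁆ = α • ⁅Z₂, X⁆ := by rw [hcomm _ hZ₂h X hX, hXe, lie_smul]
  have a2 : A ⁅Z₁, Y⁆ = β • ⁅Z₁, Y⁆ := by rw [hcomm _ hZ₁h Y hY, hYe, lie_smul]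
  have hAQ : A Q = A ⁅X, Y⁆ := by
    have b1 : α • ⁅Z₂, X⁆ = (c * β) • ⁅Z - Z', X⁆ := by
      rw [hZ₂def, smul_lie, smul_smul]
      congr 1
      field_simp
    have b2 : β • ⁅Z₁, Y⁆ = (c * α) • ⁅Z + Z', Y⁆ := by
      rw [hZ₁def, smul_lie, smul_smul]
      congr 1
      field_simp
    calc A Q = α • ⁅Z₂, X⁆ + β • ⁅Z₁, Y⁆ := by rw [hQdef, map_add, a1, a2]
      _ = (c * β) • ⁅Z - Z', X⁆ + (c * α) • ⁅Z + Z', Y⁆ := by rw [b1, b2]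
      _ = c • (β • ⁅Z - Z', X⁆ + α • ⁅Z + Z', Y⁆) := by
          rw [smul_add, smul_smul, smul_smul]
      _ = c • ((2 * (β - α)) • A ⁅X, Y⁆) := by rw [hdiff]
      _ = A ⁅X, Y⁆ := by rw [smul_smul, hc2d, one_smul]
  -- the kernel argument: Φ ⁅X,Y⁆ w = 0 for every w ∈ m with A w = 0
  have hker : ∀ w ∈ m, A w = 0 → Φ ⁅X, Y⁆ w = 0 := by
    intro w hw hAw
    have hrad : ∀ z : L, B w z = 0 := by
      intro z
      have h1 : B w (πm z) = 0 := by
        rw [hAB w hw _ (hπmem z), hAw]; simp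
      rw [hBmh w hw z, h1]
    have key : ∀ s : ℝ, s * Φ ⁅X, Y⁆ w + s ^ 2 * Φ (πm ⁅w, Y⁆) w = 0 := by
      intro s
      have hVm : X + s • w ∈ m := add_mem hX (m.smul_mem s hw)
      obtain ⟨Zs, hZs, hid⟩ := hGO' (X + s • w) hVm
      have e := hid Y hY
      have r1 : A ⁅Zs, X⁆ = α • ⁅Zs, X⁆ := by rw [hcomm Zs hZs X hX, hXe, lie_smul]
      have r2 : A ⁅Zs, w⁆ = (0 : ℝ) • ⁅Zs, w⁆ := by
        rw [hcomm Zs hZs w hw, hAw]; simp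
      have r1' : Φ ⁅Zs, X⁆ Y = 0 := horth _ (hadm Zs hZs X hX) Y hY α β hαβ r1 hYe
      have r2' : Φ ⁅Zs, w⁆ Y = 0 :=
        horth _ (hadm Zs hZs w hw) Y hY 0 β (Ne.symm hβ) r2 hYe
      have rhs0 : Φ ⁅Zs, X + s • w⁆ Y = 0 := by
        rw [lie_add, lie_smul, map_add, LinearMap.add_apply, map_smul,
          LinearMap.smul_apply, r1', r2']
        simp
      have l0 : πm ⁅X + s • w, Y⁆ = ⁅X, Y⁆ + s • πm ⁅w, Y⁆ := by
        rw [add_lie, smul_lie, map_add, map_smul, hπid _ hXYm]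
      have l1 : Φ ⁅X, Y⁆ X = 0 := by
        have hp := hpair ⁅X, Y⁆ hXYm X hX α hXe
        have hz : B X ⁅X, Y⁆ = 0 := by
          rw [← hBinv X X Y, lie_self]; simp
        rw [hz] at hp
        rcases mul_eq_zero.mp hp with hc | hc
        · exact absurd hc hα
        · exact hc
      have l2 : Φ (πm ⁅w, Y⁆) X = 0 := by
        have hp := hpair _ (hπmem ⁅w, Y⁆) X hX α hXe
        have e1 : B X (πm ⁅w, Y⁆) = B X ⁅w, Y⁆ := (hBmh X hX _).symm
        have e2 : B X ⁅w, Y⁆ = - B w ⁅X, Y⁆ := by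
          rw [← hBinv X w Y, ← lie_skew X w, map_neg, LinearMap.neg_apply, hBinv]
        rw [e1, e2, hrad ⁅X, Y⁆, neg_zero] at hp
        rcases mul_eq_zero.mp hp with hc | hc
        · exact absurd hc hα
        · exact hc
      rw [l0, rhs0] at e
      have eexp : Φ (⁅X, Y⁆ + s • πm ⁅w, Y⁆) (X + s • w) =
          Φ ⁅X, Y⁆ X + s * Φ ⁅X, Y⁆ w + s * Φ (πm ⁅w, Y⁆) X
            + s ^ 2 * Φ (πm ⁅w, Y⁆) w := by
        simp only [map_add, map_smul, LinearMap.add_apply, LinearMap.smul_apply,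
          smul_eq_mul]
        ring
      rw [eexp, l1, l2] at e
      linarith
    have k1 := key 1
    have k2 := key (-1)
    norm_num at k1 k2
    linarith
  set P : L := ⁅X, Y⁆ - Q with hPdef
  have hPm : P ∈ m := sub_mem hXYm hQm
  have hAP : A P = 0 := by rw [hPdef, map_sub, hAQ, sub_self]
  have hAP' : A P = (0 : ℝ) • P := by rw [hAP, zero_smul]
  have hΦQP : Φ Q P = 0 := by
    have o1 : Φ ⁅Z₂, X⁆ P = 0 :=
      horth _ (hadm _ hZ₂h X hX) P hPm α 0 hα a1 hAP'
    have o2 : Φ ⁅Z₁, Y⁆ P = 0 :=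
      horth _ (hadm _ hZ₁h Y hY) P hPm β 0 hβ a2 hAP'
    rw [hQdef, map_add, LinearMap.add_apply, o1, o2, add_zero]
  have hΦXP : Φ ⁅X, Y⁆ P = 0 := hker P hPm hAP
  have hPP : Φ P P = 0 := by
    have e1 : Φ P P = Φ ⁅X, Y⁆ P - Φ Q P := by
      have e0 : Φ P = Φ ⁅X, Y⁆ - Φ Q := by rw [hPdef, map_sub]
      rw [e0, LinearMap.sub_apply]
    rw [e1, hΦXP, hΦQP, sub_zero]
  have hP0 : P = 0 := hposne P hPm hPP
  have hbr : ⁅X, Y⁆ = ⁅Z₂, X⁆ + ⁅Z₁, Y⁆ := by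
    have := sub_eq_zero.mp hP0
    rw [hQdef] at this
    exact this
  refine ⟨⟨Z₁, hZ₁h, Z₂, hZ₂h, hZ₁X, hZ₂Y, hbr⟩, ?_, ?_, ?_⟩
  · intro trivX
    have h10 : Z₁ = 0 := trivX Z₁ hZ₁h hZ₁X
    have hb : ⁅X, Y⁆ = ⁅Z₂, X⁆ := by rw [hbr, h10, zero_lie, add_zero]
    exact ⟨hXYm, by rw [hb, a1]⟩
  · intro trivY
    have h20 : Z₂ = 0 := trivY Z₂ hZ₂h hZ₂Y
    have hb : ⁅X, Y⁆ = ⁅Z₁, Y⁆ := by rw [hbr, h20, zero_lie, zero_add]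
    exact ⟨hXYm, by rw [hb, a2]⟩
  · intro trivX trivY
    rw [hbr, trivX Z₁ hZ₁h hZ₁X, trivY Z₂ hZ₂h hZ₂Y, zero_lie, zero_lie, add_zero]
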